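/- Let d be even and ω = e^{2πi/d}. Define the 4-dimensional array S'[i_0,i_1,i_2,i_3] = ω^{⌊(d·i_0+i_2)(d·i_1+i_3)/(2d)⌋} of size 2d × 2d × d × d. Then any two distinct 2-dimensional subarrays obtained by fixing (i_2,i_3) ≠ (i'_2,i'_3) (with 0 ≤ i_2,i_3,i'_2,i'_3 < d, i_2 ≠ i'_2 and i_3 ≠ i'_3) are orthogonal: for all shifts (v,h), Σ_{i_0=0}^{2d-1} Σ_{i_1=0}^{2d-1} S'[i_0,i_1,i_2,i_3] · conj(S'[i_0+v, i_1+h, i'_2, i'_3]) = 0, indices mod 2d. -/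

import Mathlib

open Finset Complex

private lemma sum_range_two_mul {M : Type*} [AddCommMonoid M] (n : ℕ) (f : ℕ → M) :
    ∑ i ∈ range (2*n), f i = ∑ a ∈ range n, (f (2*a) + f (2*a+1)) := by
  induction n with
  | zero => simp
  | succ n ih =>
    have h : 2*(n+1) = (2*n+1)+1 := by ring
    rw [h, Finset.sum_range_succ, Finset.sum_range_succ, ih, Finset.sum_range_succ,
      add_assoc]

private lemma zpow_eq_of_dvd (ω : ℂ) (hω0 : ω ≠ 0) (d : ℕ) (h1 : ω ^ d = 1)
    (x y : ℤ) (hdvd : (d:ℤ) ∣ (x - y)) : ω ^ x = ω ^ y := by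
  obtain ⟨k, hk⟩ := hdvd
  have hx : x = y + d * k := by linarith
  rw [hx, zpow_add₀ hω0, zpow_mul, zpow_natCast, h1, one_zpow, mul_one]

private lemma divHelperC2 (d A s b q : ℕ) (hd : 0 < d) :
    A * (d*(2*b+q) + s) / (2*d) = b*A + A*(d*q+s)/(2*d) := by
  have h1 : A * (d*(2*b+q) + s) = A*(d*q+s) + (b*A) * (2*d) := by ring
  rw [h1, Nat.add_mul_div_right _ _ (by omega : 0 < 2*d), add_comm]

theorem constructionII_subarrays_orthogonal (d : ℕ) (hd : Even d) (hd0 : 0 < d)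
    (i2 i3 i2' i3' : ℕ) (h2 : i2 < d) (h3 : i3 < d) (h2' : i2' < d) (h3' : i3' < d)
    (hne2 : i2 ≠ i2') (hne3 : i3 ≠ i3') (v h : ℕ) :
    ∑ i0 ∈ range (2 * d), ∑ i1 ∈ range (2 * d),
      Complex.exp (2 * Real.pi * Complex.I / d) ^
          ((d * i0 + i2) * (d * i1 + i3) / (2 * d)) *
        (starRingEnd ℂ) (Complex.exp (2 * Real.pi * Complex.I / d) ^
          ((d * ((i0 + v) % (2 * d)) + i2') * (d * ((i1 + h) % (2 * d)) + i3') / (2 * d))) = 0 := by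
  set ω : ℂ := Complex.exp (2 * Real.pi * Complex.I / d) with hωdef
  have hω0 : ω ≠ 0 := Complex.exp_ne_zero _
  have hdC : (d:ℂ) ≠ 0 := Nat.cast_ne_zero.mpr hd0.ne'
  have hωd : ω ^ d = 1 := by
    rw [hωdef, ← Complex.exp_nat_mul, mul_div_cancel₀ _ hdC, Complex.exp_two_pi_mul_I]
  have hconj : ∀ n : ℕ, (starRingEnd ℂ) (ω ^ n) = ω ^ (-(n:ℤ)) := by
    intro n
    have hz : (starRingEnd ℂ) (2 * (Real.pi:ℂ) * Complex.I / d) =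
        -(2 * (Real.pi:ℂ) * Complex.I / d) := by
      simp [map_div₀, map_mul, map_ofNat, Complex.conj_I]
      ring
    rw [map_pow, hωdef, ← Complex.exp_conj, hz, Complex.exp_neg, inv_pow,
      ← zpow_natCast, ← zpow_neg]
  set z : ℂ := ω ^ ((i2:ℤ) - (i2':ℤ)) with hzdef
  have hz1 : z ≠ 1 := by
    intro hcon
    rw [hzdef, hωdef, ← Complex.exp_int_mul, Complex.exp_eq_one_iff] at hcon
    obtain ⟨n, hn⟩ := hcon
    have h2pi : (2 * (Real.pi:ℂ) * Complex.I) ≠ 0 := by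
      simp [Real.pi_ne_zero, Complex.I_ne_zero]
    have hn' : (((i2:ℤ) - i2' : ℤ) : ℂ) = n * d := by
      have hmul : (((i2:ℤ) - i2' : ℤ) : ℂ) * (2 * (Real.pi:ℂ) * Complex.I)
          = ((n:ℂ) * d) * (2 * (Real.pi:ℂ) * Complex.I) := by
        have := congrArg (fun w => w * (d:ℂ)) hn
        field_simp at this
        push_cast at this ⊢
        linear_combination (2 * (Real.pi:ℂ) * Complex.I) * this
      exact mul_right_cancel₀ h2pi hmul
    have heq : ((i2:ℤ) - i2') = n * d := by exact_mod_cast hn'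
    have hb1 : ((i2:ℤ) - i2') ≠ 0 := fun h0 => hne2 (by omega)
    rcases lt_trichotomy n 0 with hn0 | hn0 | hn0
    · nlinarith [heq]
    · rw [hn0] at heq; simp at heq; exact hb1 heq
    · nlinarith [heq]
  have hzd : z ^ d = 1 := by
    rw [hzdef, ← zpow_natCast, ← zpow_mul, mul_comm, zpow_mul, zpow_natCast, hωd, one_zpow]
  have hgeom : ∑ b ∈ range d, z ^ b = 0 := by
    rw [geom_sum_eq hz1, hzd, sub_self, zero_div]
  apply Finset.sum_eq_zero
  intro i0 _
  set i0' : ℕ := (i0 + v) % (2*d) with hi0'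
  set A : ℕ := d * i0 + i2 with hA
  set A' : ℕ := d * i0' + i2' with hA'
  have hterm : ∀ i1 : ℕ,
      ω ^ (A * (d * i1 + i3) / (2*d)) *
        (starRingEnd ℂ) (ω ^ (A' * (d * ((i1 + h) % (2*d)) + i3') / (2*d))) =
      ω ^ (((A * (d * i1 + i3) / (2*d) : ℕ) : ℤ) - ((A' * (d * ((i1 + h) % (2*d)) + i3') / (2*d) : ℕ) : ℤ)) := by
    intro i1
    rw [hconj, ← zpow_natCast ω (A * (d * i1 + i3) / (2*d)), ← zpow_add₀ hω0, sub_eq_add_neg]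
  have key : ∀ b q : ℕ,
      ω ^ ((((A * (d * (2*b+q) + i3) / (2*d)) : ℕ) : ℤ) -
        (((A' * (d * (((2*b+q) + h) % (2*d)) + i3') / (2*d)) : ℕ) : ℤ)) =
      ω ^ (((A*(d*q+i3)/(2*d) : ℕ) : ℤ) - ((A'*(d*((q+h)%2)+i3')/(2*d) : ℕ) : ℤ)
            - (((q+h)/2 : ℕ) : ℤ) * (i2' : ℤ)) * z ^ b := by
    intro b q
    set j : ℕ := ((2*b+q) + h) % (2*d) with hj
    have hE1 : A * (d * (2*b+q) + i3) / (2*d) = b*A + A*(d*q+i3)/(2*d) :=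
      divHelperC2 d A i3 b q hd0
    have hjsplit : j = 2*(j/2) + j % 2 := by omega
    have hE2 : A' * (d * j + i3') / (2*d) = (j/2)*A' + A'*(d*(j%2)+i3')/(2*d) := by
      conv_lhs => rw [hjsplit]
      exact divHelperC2 d A' i3' (j/2) (j%2) hd0
    have hjm2 : j % 2 = (q + h) % 2 := by
      rw [hj, Nat.mod_mod_of_dvd _ ⟨d, rfl⟩]
      omega
    obtain ⟨t, ht⟩ : ∃ t, 2*b+q+h = 2*d*t + j := ⟨(2*b+q+h)/(2*d), by rw [hj]; exact (Nat.div_add_mod (2*b+q+h) (2*d)).symm⟩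
    have hjd2 : ((j/2 : ℕ) : ℤ) = (b:ℤ) + (((q+h)/2 : ℕ) : ℤ) - d * t := by
      have c1 : (j:ℤ) = 2*((j/2 : ℕ):ℤ) + ((j%2 : ℕ):ℤ) := by exact_mod_cast hjsplit
      have c2 : ((q:ℤ) + h) = 2*(((q+h)/2 : ℕ):ℤ) + (((q+h)%2 : ℕ):ℤ) := by
        exact_mod_cast (Nat.div_add_mod (q+h) 2).symm
      have c3 : 2*(b:ℤ)+q+h = 2*(d:ℤ)*(t:ℤ) + (j:ℤ) := by exact_mod_cast ht
      have c4 : ((j%2 : ℕ):ℤ) = (((q+h)%2 : ℕ):ℤ) := by exact_mod_cast hjm2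
      linarith
    rw [hE1, hE2, hjm2]
    have hdvd : (d:ℤ) ∣ ((((b*A + A*(d*q+i3)/(2*d) : ℕ) : ℤ) -
        (((j/2)*A' + A'*(d*((q+h)%2)+i3')/(2*d) : ℕ) : ℤ))
        - ((((A*(d*q+i3)/(2*d) : ℕ) : ℤ) - ((A'*(d*((q+h)%2)+i3')/(2*d) : ℕ) : ℤ)
            - (((q+h)/2 : ℕ) : ℤ) * (i2' : ℤ)) + (b:ℤ) * ((i2:ℤ) - (i2':ℤ)))) := by
      refine ⟨(b:ℤ)*i0 - ((b:ℤ) + (((q+h)/2 : ℕ) : ℤ))*(i0':ℤ) + t*((A':ℕ):ℤ), ?_⟩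
      have hAz : ((A:ℕ):ℤ) = (d:ℤ)*(i0:ℤ) + (i2:ℤ) := by rw [hA]; push_cast; ring
      have hAz' : ((A':ℕ):ℤ) = (d:ℤ)*(i0':ℤ) + (i2':ℤ) := by rw [hA']; push_cast; ring
      generalize A*(d*q+i3)/(2*d) = n1
      generalize A'*(d*((q+h)%2)+i3')/(2*d) = n2
      generalize hgu : (q+h)/2 = u at hjd2 ⊢
      generalize hgm : j/2 = m at hjd2 ⊢
      push_cast
      linear_combination (-((A':ℕ):ℤ)) * hjd2 + (b:ℤ) * hAz + (-(b:ℤ) - (u:ℤ)) * hAz' 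
    rw [zpow_eq_of_dvd ω hω0 d hωd _ _ hdvd, zpow_add₀ hω0, hzdef,
      ← zpow_natCast (ω ^ ((i2:ℤ) - (i2':ℤ))), ← zpow_mul,
      show ((i2:ℤ) - (i2':ℤ)) * (b:ℤ) = (b:ℤ) * ((i2:ℤ) - (i2':ℤ)) from mul_comm _ _]
  rw [sum_range_two_mul d]
  have hsum : ∀ b : ℕ,
      (ω ^ (A * (d * (2*b) + i3) / (2*d)) *
          (starRingEnd ℂ) (ω ^ (A' * (d * (((2*b) + h) % (2*d)) + i3') / (2*d))) +
       ω ^ (A * (d * (2*b+1) + i3) / (2*d)) *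
          (starRingEnd ℂ) (ω ^ (A' * (d * (((2*b+1) + h) % (2*d)) + i3') / (2*d)))) =
      (ω ^ (((A*(d*0+i3)/(2*d) : ℕ) : ℤ) - ((A'*(d*((0+h)%2)+i3')/(2*d) : ℕ) : ℤ)
            - (((0+h)/2 : ℕ) : ℤ) * (i2' : ℤ))
       + ω ^ (((A*(d*1+i3)/(2*d) : ℕ) : ℤ) - ((A'*(d*((1+h)%2)+i3')/(2*d) : ℕ) : ℤ)
            - (((1+h)/2 : ℕ) : ℤ) * (i2' : ℤ))) * z ^ b := by
    intro b
    rw [hterm (2*b), hterm (2*b+1)]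
    rw [show 2*b = 2*b+0 from rfl, key b 0, key b 1]
    ring
  calc ∑ b ∈ range d, _ = ∑ b ∈ range d,
      (ω ^ (((A*(d*0+i3)/(2*d) : ℕ) : ℤ) - ((A'*(d*((0+h)%2)+i3')/(2*d) : ℕ) : ℤ)
            - (((0+h)/2 : ℕ) : ℤ) * (i2' : ℤ))
       + ω ^ (((A*(d*1+i3)/(2*d) : ℕ) : ℤ) - ((A'*(d*((1+h)%2)+i3')/(2*d) : ℕ) : ℤ)
            - (((1+h)/2 : ℕ) : ℤ) * (i2' : ℤ))) * z ^ b := Finset.sum_congr rfl (fun b _ => hsum b)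
    _ = 0 := by rw [← Finset.mul_sum, hgeom, mul_zero]
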